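/- Pointwise surrogate bound: let K ≥ 2, let z ∈ ℝ^K be a logit vector, let y ∈ {1,...,K} and γ_y > 0. Then Φ_{γ_y}(z_y − max_{y'≠y} z_{y'}) ≤ (1/ln 2) · ln(1 + Σ_{y'≠y} exp((z_{y'} − z_y)/γ_y)). -/

import Mathlib

/-- The ramp function `Φ_γ(u) = min(1, max(0, 1 − u/γ))`. -/
noncomputable def ramp (γ u : ℝ) : ℝ := min 1 (max 0 (1 - u / γ))

theorem eraseUnivNonempty {K : ℕ} (hK : 2 ≤ K) (y : Fin K) :
    (Finset.univ.erase y).Nonempty := by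
  rw [← Finset.card_pos, Finset.card_erase_of_mem (Finset.mem_univ y),
    Finset.card_univ, Fintype.card_fin]
  omega

/-- `max_{y' ≠ y} z_{y'}`, the largest score among the classes other than `y`. -/
noncomputable def maxOther {K : ℕ} (hK : 2 ≤ K) (z : Fin K → ℝ) (y : Fin K) : ℝ :=
  (Finset.univ.erase y).sup' (eraseUnivNonempty hK y) z

lemma half_lt_log_two : (1:ℝ)/2 < Real.log 2 := by
  have := Real.log_two_gt_d9
  linarith

lemma key_ramp (t : ℝ) : min 1 (max 0 (1 - t)) ≤ (1 / Real.log 2) * Real.log (1 + Real.exp (-t)) := by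
  have hlog2 : (0:ℝ) < Real.log 2 := by linarith [half_lt_log_two]
  rcases le_or_gt t 0 with ht | ht
  · have h1 : min 1 (max 0 (1 - t)) ≤ 1 := min_le_left _ _
    have h2 : Real.log 2 ≤ Real.log (1 + Real.exp (-t)) := by
      apply Real.log_le_log (by norm_num)
      have : (1:ℝ) ≤ Real.exp (-t) := Real.one_le_exp (by linarith)
      linarith
    calc min 1 (max 0 (1 - t)) ≤ 1 := h1
      _ ≤ (1 / Real.log 2) * Real.log (1 + Real.exp (-t)) := by
          rw [div_mul_eq_mul_div, one_mul, le_div_iff₀ hlog2, one_mul]; exact h2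
  · rcases le_or_gt 1 t with ht1 | ht1
    · have h1 : min 1 (max 0 (1 - t)) ≤ 0 := by
        apply min_le_of_right_le
        simp [max_le_iff]; linarith
      have h2 : 0 ≤ Real.log (1 + Real.exp (-t)) := by
        apply Real.log_nonneg
        linarith [Real.exp_pos (-t)]
      have := mul_nonneg (le_of_lt (by positivity : (0:ℝ) < 1 / Real.log 2)) h2
      linarith
    · have h1 : min 1 (max 0 (1 - t)) ≤ 1 - t := by
        apply min_le_of_right_le
        apply max_le (by linarith) le_rfl
      -- 1 + exp(-t) ≥ 2 exp(-t/2)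
      have hsq : (0:ℝ) ≤ (1 - Real.exp (-t/2))^2 := sq_nonneg _
      have hexp : Real.exp (-t/2) * Real.exp (-t/2) = Real.exp (-t) := by
        rw [← Real.exp_add]; ring_nf
      have h2 : 2 * Real.exp (-t/2) ≤ 1 + Real.exp (-t) := by nlinarith
      have h3 : Real.log 2 - t/2 ≤ Real.log (1 + Real.exp (-t)) := by
        have := Real.log_le_log (by positivity : (0:ℝ) < 2 * Real.exp (-t/2)) h2
        rw [Real.log_mul (by norm_num) (Real.exp_ne_zero _), Real.log_exp] at this; linarith
      have h4 : (1 - t) * Real.log 2 ≤ Real.log 2 - t/2 := by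
        nlinarith [half_lt_log_two]
      calc min 1 (max 0 (1 - t)) ≤ 1 - t := h1
        _ ≤ (1 / Real.log 2) * Real.log (1 + Real.exp (-t)) := by
            rw [div_mul_eq_mul_div, one_mul, le_div_iff₀ hlog2]
            linarith

theorem margin_loss_le_inv_log_two_mul_ce (K : ℕ) (hK : 2 ≤ K) (z : Fin K → ℝ)
    (y : Fin K) (γy : ℝ) (hγ : 0 < γy) :
    ramp γy (z y - maxOther hK z y) ≤
      (1 / Real.log 2) *
        Real.log (1 + ∑ y' ∈ Finset.univ.erase y, Real.exp ((z y' - z y) / γy)) := by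
  set t : ℝ := (z y - maxOther hK z y) / γy with ht
  have key := key_ramp t
  have hramp : ramp γy (z y - maxOther hK z y) = min 1 (max 0 (1 - t)) := rfl
  rw [hramp]
  refine key.trans ?_
  have hlog2 : (0:ℝ) < Real.log 2 := by linarith [half_lt_log_two]
  apply mul_le_mul_of_nonneg_left _ (by positivity)
  apply Real.log_le_log (by positivity)
  -- exp(-t) ≤ sum
  obtain ⟨y₀, hy₀, hy₀eq⟩ := Finset.exists_mem_eq_sup' (eraseUnivNonempty hK y) z
  have hle : Real.exp (-t) ≤ ∑ y' ∈ Finset.univ.erase y, Real.exp ((z y' - z y) / γy) := by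
    have : Real.exp (-t) = Real.exp ((z y₀ - z y) / γy) := by
      rw [ht]
      congr 1
      rw [maxOther, hy₀eq]
      field_simp
      ring
    rw [this]
    exact Finset.single_le_sum (f := fun y' => Real.exp ((z y' - z y) / γy))
      (fun i _ => (Real.exp_pos _).le) hy₀
  linarith
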